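/- Let G be a strongly connected digraph with α ∈ [0,1), let X be the positive Perron eigenvector of A_α(G) with λ_α(G) its spectral radius, and let v_p, v_q be distinct vertices. Suppose v_1,...,v_t are in-neighbors of v_p that are neither in-neighbors of v_q nor equal to v_q. Let H be obtained from G by replacing each arc (v_i, v_p) by (v_i, v_q) for i = 1,...,t. If x_{v_q} ≥ x_{v_p}, then λ_α(H) ≥ λ_α(G). Furthermore, if H is strongly connected and x_{v_q} > x_{v_p}, then λ_α(H) > λ_α(G). -/

import Mathlib

open scoped Classical
open Matrix

/-- Spectral radius: largest modulus of (complex) eigenvalues, i.e. roots of the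
characteristic polynomial of the complexified matrix. -/
noncomputable def specRad {m : Type*} [Fintype m] [DecidableEq m] (M : Matrix m m ℝ) : ℝ :=
  sSup {r : ℝ | ∃ μ : ℂ, (M.map Complex.ofReal).charpoly.IsRoot μ ∧ r = ‖μ‖}

/-- Irreducibility of a matrix: the associated digraph is strongly connected. -/
def Irred {n : ℕ} (M : Matrix (Fin n) (Fin n) ℝ) : Prop :=
  ∀ i j : Fin n, Relation.ReflTransGen (fun a b => M a b ≠ 0) i j

/-- Outdegree of a vertex in a digraph on `Fin n`. -/
noncomputable def outdeg {n : ℕ} (G : Fin n → Fin n → Prop) (i : Fin n) : ℕ :=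
  (Finset.univ.filter (fun j => G i j)).card

/-- Indegree of a vertex. -/
noncomputable def indeg {n : ℕ} (G : Fin n → Fin n → Prop) (i : Fin n) : ℕ :=
  (Finset.univ.filter (fun j => G j i)).card

/-- The matrix `A_α(G) = α D(G) + (1-α) A(G)`. -/
noncomputable def Aalpha {n : ℕ} (α : ℝ) (G : Fin n → Fin n → Prop) :
    Matrix (Fin n) (Fin n) ℝ :=
  α • Matrix.diagonal (fun i => (outdeg G i : ℝ)) +
    (1 - α) • (Matrix.of fun i j => if G i j then (1 : ℝ) else 0)

/-- The `A_α` spectral radius of a digraph. -/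
noncomputable def lamAlpha {n : ℕ} (α : ℝ) (G : Fin n → Fin n → Prop) : ℝ :=
  specRad (Aalpha α G)

/-- Strong connectivity of a digraph. -/
def SConn {n : ℕ} (G : Fin n → Fin n → Prop) : Prop :=
  ∀ u v : Fin n, Relation.ReflTransGen G u v

/-- Isomorphism of digraphs on `Fin n`. -/
def DIso {n : ℕ} (G H : Fin n → Fin n → Prop) : Prop :=
  ∃ e : Equiv.Perm (Fin n), ∀ u v, G u v ↔ H (e u) (e v)

/-- The directed cycle on `Fin n`. -/
def dirCycle (n : ℕ) : Fin n → Fin n → Prop :=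
  fun i j => j.val = (i.val + 1) % n


/-- Deleting a set of vertices from a digraph. -/
def delVerts {n : ℕ} (G : Fin n → Fin n → Prop) (S : Finset (Fin n)) :
    Fin n → Fin n → Prop :=
  fun a b => G a b ∧ a ∉ S ∧ b ∉ S

/-- The digraph obtained by deleting the vertices of `S` is strongly connected. -/
def SConnAvoid {n : ℕ} (G : Fin n → Fin n → Prop) (S : Finset (Fin n)) : Prop :=
  ∀ u v : Fin n, u ∉ S → v ∉ S → Relation.ReflTransGen (delVerts G S) u v

/-- The vertex connectivity of `G` equals `k`. -/
def vertexConnIs {n : ℕ} (G : Fin n → Fin n → Prop) (k : ℕ) : Prop :=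
  (∃ S : Finset (Fin n), S.card = k ∧ ¬ SConnAvoid G S) ∧
    ∀ S : Finset (Fin n), ¬ SConnAvoid G S → k ≤ S.card

/-- Deleting a set of arcs from a digraph. -/
def delArcs {n : ℕ} (G : Fin n → Fin n → Prop) (S : Finset (Fin n × Fin n)) :
    Fin n → Fin n → Prop :=
  fun a b => G a b ∧ (a, b) ∉ S

/-- The arc connectivity of `G` equals `k`. -/
def arcConnIs {n : ℕ} (G : Fin n → Fin n → Prop) (k : ℕ) : Prop :=
  (∃ S : Finset (Fin n × Fin n), S.card = k ∧ ¬ SConn (delArcs G S)) ∧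
    ∀ S : Finset (Fin n × Fin n), ¬ SConn (delArcs G S) → k ≤ S.card

/-- `G` contains a directed cycle of length `g`. -/
def hasCycleLen {n : ℕ} (G : Fin n → Fin n → Prop) (g : ℕ) : Prop :=
  ∃ c : Fin g → Fin n, Function.Injective c ∧
    ∀ i : Fin g, G (c i) (c ⟨(i.val + 1) % g, Nat.mod_lt _ i.pos⟩)

/-- The girth of `G` equals `g`. -/
def girthIs {n : ℕ} (G : Fin n → Fin n → Prop) (g : ℕ) : Prop :=
  hasCycleLen G g ∧ ∀ m, 0 < m → m < g → ¬ hasCycleLen G m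

/-- The clique number of `G` equals `d`. -/
def cliqueNumIs {n : ℕ} (G : Fin n → Fin n → Prop) (d : ℕ) : Prop :=
  (∃ S : Finset (Fin n), S.card = d ∧ ∀ u ∈ S, ∀ v ∈ S, u ≠ v → G u v ∧ G v u) ∧
    ∀ S : Finset (Fin n), (∀ u ∈ S, ∀ v ∈ S, u ≠ v → G u v ∧ G v u) → S.card ≤ d

/-- The digraph `C_{n,g}`: the directed cycle `v_1 … v_g v_1` (indices `0,…,g-1`)
together with the directed path `v_g v_{g+1} … v_n v_1`. -/
def Cng (n g : ℕ) : Fin n → Fin n → Prop := fun i j =>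
  j.val = i.val + 1 ∨ (i.val = g - 1 ∧ j.val = 0) ∨ (i.val = n - 1 ∧ j.val = 0)

/-- `C'_{n,g} = C_{n,g} - {(v_n, v_1)} + {(v_n, v_g)}`. -/
def Cng' (n g : ℕ) : Fin n → Fin n → Prop := fun i j =>
  j.val = i.val + 1 ∨ (i.val = g - 1 ∧ j.val = 0) ∨ (i.val = n - 1 ∧ j.val = g - 1)

/-- The digraph `B_{n,d}`: a complete digraph on the `d` vertices
`{0} ∪ {n-d+1, …, n-1}` together with the directed path `v_1 v_2 … v_{n-d+2}`
(indices `0, 1, …, n-d+1`). -/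
def Bnd (n d : ℕ) : Fin n → Fin n → Prop := fun i j =>
  (j.val = i.val + 1 ∧ j.val ≤ n - d + 1) ∨
    (i ≠ j ∧ (i.val = 0 ∨ n - d + 1 ≤ i.val) ∧ (j.val = 0 ∨ n - d + 1 ≤ j.val))

/-- `B'_{n,d} = B_{n,d} - {(v_{n-d+1}, v_{n-d+2})} + {(v_{n-d+1}, v_1)}`. -/
def Bnd' (n d : ℕ) : Fin n → Fin n → Prop := fun i j =>
  (j.val = i.val + 1 ∧ j.val ≤ n - d) ∨ (i.val = n - d ∧ j.val = 0) ∨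
    (i ≠ j ∧ (i.val = 0 ∨ n - d + 1 ≤ i.val) ∧ (j.val = 0 ∨ n - d + 1 ≤ j.val))

/-- The digraph `K(n,k,m)`: parts `K_m` (indices `< m`), `K_k` (indices in `[m, m+k)`),
`K_{n-k-m}` (indices `≥ m+k`); all parts complete, `K_k` joined both ways to the others,
and all one-way arcs from `K_m` to `K_{n-k-m}`. -/
def Knkm (n k m : ℕ) : Fin n → Fin n → Prop := fun i j =>
  i ≠ j ∧ ¬(m + k ≤ i.val ∧ j.val < m)

open Polynomial
open scoped ENNReal NNReal

lemma spectrum_iff_root {n : ℕ} (M : Matrix (Fin n) (Fin n) ℂ) (z : ℂ) :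
    z ∈ spectrum ℂ M ↔ M.charpoly.IsRoot z := by
  rw [spectrum.mem_iff, Matrix.isUnit_iff_isUnit_det, isUnit_iff_ne_zero, not_not]
  have : (algebraMap ℂ (Matrix (Fin n) (Fin n) ℂ) z - M).det = M.charpoly.eval z := by
    rw [Matrix.charpoly]
    have := (Polynomial.evalRingHom z).map_det M.charmatrix
    rw [show Polynomial.eval z M.charmatrix.det = (Polynomial.evalRingHom z) M.charmatrix.det from rfl, this]
    congr 1
    ext i j
    by_cases h : i = j
    · subst h
      simp [Matrix.charmatrix_apply_eq, Matrix.algebraMap_matrix_apply]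
    · simp [Matrix.charmatrix_apply_ne _ _ _ h, Matrix.algebraMap_matrix_apply, h]
  rw [this]
  rfl


lemma entries_pow_nonneg {n : ℕ} {M : Matrix (Fin n) (Fin n) ℝ}
    (hM : ∀ i j, 0 ≤ M i j) : ∀ k i j, 0 ≤ (M ^ k) i j := by
  intro k
  induction k with
  | zero => intro i j; by_cases h : i = j <;> simp [pow_zero, Matrix.one_apply, h]
  | succ k ih =>
    intro i j
    rw [pow_succ, Matrix.mul_apply]
    exact Finset.sum_nonneg fun l _ => mul_nonneg (ih i l) (hM l j)

lemma mulVec_mono {n : ℕ} {M : Matrix (Fin n) (Fin n) ℝ}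
    (hM : ∀ i j, 0 ≤ M i j) {u v : Fin n → ℝ} (huv : ∀ j, u j ≤ v j) :
    ∀ i, M.mulVec u i ≤ M.mulVec v i := by
  intro i
  simp only [Matrix.mulVec, dotProduct]
  exact Finset.sum_le_sum fun j _ => mul_le_mul_of_nonneg_left (huv j) (hM i j)

lemma pow_mulVec_ge {n : ℕ} (M : Matrix (Fin n) (Fin n) ℝ)
    (hM : ∀ i j, 0 ≤ M i j) (Z : Fin n → ℝ) (hZ : ∀ i, 0 ≤ Z i)
    (μ : ℝ) (hμ : 0 ≤ μ) (h : ∀ i, μ * Z i ≤ M.mulVec Z i) :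
    ∀ k i, μ ^ k * Z i ≤ (M ^ k).mulVec Z i := by
  intro k
  induction k with
  | zero => intro i; simp [Matrix.one_mulVec]
  | succ k ih =>
    intro i
    have h1 : (M ^ (k + 1)).mulVec Z i = M.mulVec ((M ^ k).mulVec Z) i := by
      rw [pow_succ', ← Matrix.mulVec_mulVec]
    rw [h1]
    have h2 : M.mulVec (fun j => μ ^ k * Z j) i ≤ M.mulVec ((M ^ k).mulVec Z) i :=
      mulVec_mono hM (fun j => ih j) i
    have h3 : M.mulVec (fun j => μ ^ k * Z j) i = μ ^ k * M.mulVec Z i := by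
      simp only [Matrix.mulVec, dotProduct, Finset.mul_sum]; exact Finset.sum_congr rfl fun j _ => by ring
    calc μ ^ (k+1) * Z i = μ ^ k * (μ * Z i) := by ring
    _ ≤ μ ^ k * M.mulVec Z i := by
        exact mul_le_mul_of_nonneg_left (h i) (by positivity)
    _ = M.mulVec (fun j => μ ^ k * Z j) i := h3.symm
    _ ≤ _ := h2

lemma specRad_ge {n : ℕ} (hn : 0 < n) (M : Matrix (Fin n) (Fin n) ℝ)
    (hM : ∀ i j, 0 ≤ M i j) (Z : Fin n → ℝ) (hZ : ∀ i, 0 < Z i)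
    (μ : ℝ) (hμ : 0 ≤ μ) (h : ∀ i, μ * Z i ≤ M.mulVec Z i) :
    μ ≤ specRad M := by
  haveI : NeZero n := ⟨hn.ne'⟩
  letI : NormedRing (Matrix (Fin n) (Fin n) ℂ) := Matrix.linftyOpNormedRing
  letI : NormedAlgebra ℂ (Matrix (Fin n) (Fin n) ℂ) := Matrix.linftyOpNormedAlgebra
  letI : CompleteSpace (Matrix (Fin n) (Fin n) ℂ) := FiniteDimensional.complete ℂ _
  set Mc : Matrix (Fin n) (Fin n) ℂ := M.map Complex.ofReal with hMc
  -- the key norm bound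
  have key : ∀ k : ℕ, μ ^ k ≤ ‖Mc ^ k‖ := by
    intro k
    obtain ⟨i, _, hi⟩ := Finset.exists_max_image Finset.univ Z ⟨⟨0, hn⟩, Finset.mem_univ _⟩
    have hpow := pow_mulVec_ge M hM Z (fun i => (hZ i).le) μ hμ h k i
    have hsum : (M ^ k).mulVec Z i ≤ (∑ j, (M ^ k) i j) * Z i := by
      rw [Finset.sum_mul]
      simp only [Matrix.mulVec, dotProduct]
      exact Finset.sum_le_sum fun j _ =>
        mul_le_mul_of_nonneg_left (hi j (Finset.mem_univ j)) (entries_pow_nonneg hM k i j)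
    have h1 : μ ^ k ≤ ∑ j, (M ^ k) i j := by
      have := hpow.trans hsum
      exact le_of_mul_le_mul_right (by simpa [mul_comm] using this) (hZ i)
    have hmap : Mc ^ k = (M ^ k).map Complex.ofReal := by
      have h0 : Mc = Complex.ofRealHom.mapMatrix M := rfl
      rw [h0, ← map_pow]
      rfl
    have h2 : (∑ j, (M ^ k) i j) ≤ ‖Mc ^ k‖ := by
      rw [hmap]
      have hb : (∑ j, ‖((M ^ k).map Complex.ofReal) i j‖₊) ≤ ‖(M ^ k).map Complex.ofReal‖₊ := by
        rw [Matrix.linfty_opNNNorm_def]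
        exact Finset.le_sup (f := fun i => ∑ j, ‖((M ^ k).map Complex.ofReal) i j‖₊) (Finset.mem_univ i)
      have := NNReal.coe_le_coe.mpr hb
      push_cast at this
      refine le_trans (le_of_eq ?_) this
      refine Finset.sum_congr rfl fun j _ => ?_
      simp [Matrix.map_apply, Complex.norm_real, Real.norm_eq_abs,
        abs_of_nonneg (entries_pow_nonneg hM k i j)]
    exact h1.trans h2
  -- pass to the spectral radius via Gelfand's formula
  set c : ℝ≥0 := μ.toNNReal with hc
  have hev : ∀ᶠ k : ℕ in Filter.atTop,
      (c : ℝ≥0∞) ≤ (‖Mc ^ k‖₊ : ℝ≥0∞) ^ (1 / (k : ℝ)) := by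
    filter_upwards [Filter.eventually_ge_atTop 1] with k hk
    have hk0 : (k : ℝ) ≠ 0 := Nat.cast_ne_zero.mpr (by omega)
    have h1 : (c : ℝ≥0∞) ^ (k : ℕ) ≤ (‖Mc ^ k‖₊ : ℝ≥0∞) := by
      rw [← ENNReal.coe_pow, ENNReal.coe_le_coe, ← NNReal.coe_le_coe]
      push_cast
      rw [Real.coe_toNNReal μ hμ]
      exact key k
    have h2 := ENNReal.rpow_le_rpow h1 (by positivity : (0:ℝ) ≤ 1 / (k:ℝ))
    calc (c : ℝ≥0∞) = ((c : ℝ≥0∞) ^ (k : ℕ)) ^ (1 / (k:ℝ)) := by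
          rw [← ENNReal.rpow_natCast, ← ENNReal.rpow_mul, mul_one_div_cancel hk0,
            ENNReal.rpow_one]
    _ ≤ _ := h2
  have hSR : (c : ℝ≥0∞) ≤ spectralRadius ℂ Mc :=
    ge_of_tendsto (spectrum.pow_nnnorm_pow_one_div_tendsto_nhds_spectralRadius Mc) hev
  obtain ⟨z, hz, hznorm⟩ := spectrum.exists_nnnorm_eq_spectralRadius Mc
  have hzroot : Mc.charpoly.IsRoot z := (spectrum_iff_root Mc z).mp hz
  have hμz : μ ≤ ‖z‖ := by
    rw [← hznorm] at hSR
    rw [ENNReal.coe_le_coe, ← NNReal.coe_le_coe] at hSR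
    rw [Real.coe_toNNReal μ hμ] at hSR
    exact hSR.trans_eq (by simp)
  -- conclude
  have hne : Mc.charpoly ≠ 0 := (Mc.charpoly_monic).ne_zero
  have hfin : {x : ℂ | Mc.charpoly.IsRoot x}.Finite := Polynomial.finite_setOf_isRoot hne
  have hSeq : {r : ℝ | ∃ w : ℂ, Mc.charpoly.IsRoot w ∧ r = ‖w‖}
      = (fun w : ℂ => ‖w‖) '' {x : ℂ | Mc.charpoly.IsRoot x} := by
    ext r
    constructor
    · rintro ⟨w, hw, rfl⟩; exact ⟨w, hw, rfl⟩
    · rintro ⟨w, hw, rfl⟩; exact ⟨w, hw, rfl⟩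
  have hbdd : BddAbove {r : ℝ | ∃ w : ℂ, Mc.charpoly.IsRoot w ∧ r = ‖w‖} := by
    rw [hSeq]; exact (hfin.image _).bddAbove
  have hmem : ‖z‖ ∈
      {r : ℝ | ∃ w : ℂ, Mc.charpoly.IsRoot w ∧ r = ‖w‖} := ⟨z, hzroot, rfl⟩
  exact hμz.trans (le_csSup hbdd hmem)

lemma mulVec_nonneg {n : ℕ} {M : Matrix (Fin n) (Fin n) ℝ} (hM : ∀ i j, 0 ≤ M i j)
    {v : Fin n → ℝ} (hv : ∀ i, 0 ≤ v i) : ∀ i, 0 ≤ M.mulVec v i := by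
  intro i
  simp only [Matrix.mulVec, dotProduct]
  exact Finset.sum_nonneg fun j _ => mul_nonneg (hM i j) (hv j)

noncomputable def iterVec {n : ℕ} (M : Matrix (Fin n) (Fin n) ℝ) (w : Fin n → ℝ) : ℕ → Fin n → ℝ
  | 0 => w
  | k + 1 => iterVec M w k + M.mulVec (iterVec M w k)

lemma iterVec_nonneg {n : ℕ} {M : Matrix (Fin n) (Fin n) ℝ} (hM : ∀ i j, 0 ≤ M i j)
    {w : Fin n → ℝ} (hw : ∀ i, 0 ≤ w i) : ∀ k i, 0 ≤ iterVec M w k i := by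
  intro k
  induction k with
  | zero => exact hw
  | succ k ih =>
    intro i
    have : 0 ≤ M.mulVec (iterVec M w k) i := mulVec_nonneg hM ih i
    simpa [iterVec] using add_nonneg (ih i) this

lemma iterVec_mono {n : ℕ} {M : Matrix (Fin n) (Fin n) ℝ} (hM : ∀ i j, 0 ≤ M i j)
    {w : Fin n → ℝ} (hw : ∀ i, 0 ≤ w i) {k l : ℕ} (hkl : k ≤ l) :
    ∀ i, iterVec M w k i ≤ iterVec M w l i := by
  induction l with
  | zero => intro i; rw [Nat.le_zero.mp hkl]
  | succ l ih =>
    intro i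
    rcases Nat.lt_or_ge k (l + 1) with hlt | hge
    · have h1 : iterVec M w k i ≤ iterVec M w l i := ih (Nat.lt_succ_iff.mp hlt) i
      have h2 : 0 ≤ M.mulVec (iterVec M w l) i :=
        mulVec_nonneg hM (iterVec_nonneg hM hw l) i
      calc iterVec M w k i ≤ iterVec M w l i := h1
      _ ≤ iterVec M w (l + 1) i := by simp only [iterVec, Pi.add_apply]; linarith
    · have : k = l + 1 := le_antisymm hkl hge
      rw [this]

lemma iterVec_add {n : ℕ} (M : Matrix (Fin n) (Fin n) ℝ) (u v : Fin n → ℝ) :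
    ∀ k, iterVec M (u + v) k = iterVec M u k + iterVec M v k := by
  intro k
  induction k with
  | zero => rfl
  | succ k ih => simp only [iterVec, ih, Matrix.mulVec_add]; abel

lemma iterVec_smul {n : ℕ} (M : Matrix (Fin n) (Fin n) ℝ) (c : ℝ) (w : Fin n → ℝ) :
    ∀ k, iterVec M (c • w) k = c • iterVec M w k := by
  intro k
  induction k with
  | zero => rfl
  | succ k ih => simp only [iterVec, ih, Matrix.mulVec_smul, smul_add]

lemma iterVec_mulVec {n : ℕ} (M : Matrix (Fin n) (Fin n) ℝ) (w : Fin n → ℝ) :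
    ∀ k, iterVec M (M.mulVec w) k = M.mulVec (iterVec M w k) := by
  intro k
  induction k with
  | zero => rfl
  | succ k ih => simp only [iterVec, ih, Matrix.mulVec_add]

lemma iterVec_pos_of_reach {n : ℕ} {M : Matrix (Fin n) (Fin n) ℝ} (hM : ∀ i j, 0 ≤ M i j)
    {R : Fin n → Fin n → Prop} (hedge : ∀ i j, R i j → 0 < M i j)
    {w : Fin n → ℝ} (hw : ∀ i, 0 ≤ w i) {j : Fin n} (hj : 0 < w j) :
    ∀ i, Relation.ReflTransGen R i j → ∃ k, 0 < iterVec M w k i := by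
  intro i hreach
  induction hreach using Relation.ReflTransGen.head_induction_on with
  | refl => exact ⟨0, hj⟩
  | head hab _ ih =>
    obtain ⟨k, hk⟩ := ih
    rename_i a b _
    refine ⟨k + 1, ?_⟩
    have h1 : M a b * iterVec M w k b ≤ M.mulVec (iterVec M w k) a := by
      simp only [Matrix.mulVec, dotProduct]
      exact Finset.single_le_sum
        (f := fun j => M a j * iterVec M w k j)
        (fun j _ => mul_nonneg (hM a j) (iterVec_nonneg hM hw k j)) (Finset.mem_univ b)
    have h2 : 0 < M a b * iterVec M w k b := mul_pos (hedge a b hab) hk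
    have h3 : 0 ≤ iterVec M w k a := iterVec_nonneg hM hw k a
    simp only [iterVec, Pi.add_apply]
    linarith

lemma Aalpha_apply {n : ℕ} (α : ℝ) (G : Fin n → Fin n → Prop) (i j : Fin n) :
    Aalpha α G i j = α * (Matrix.diagonal (fun i => (outdeg G i : ℝ)) i j)
      + (1 - α) * (if G i j then (1 : ℝ) else 0) := by
  simp [Aalpha, Matrix.add_apply]

lemma Aalpha_nonneg {n : ℕ} {α : ℝ} (hα0 : 0 ≤ α) (hα1 : α ≤ 1)
    (G : Fin n → Fin n → Prop) : ∀ i j, 0 ≤ Aalpha α G i j := by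
  intro i j
  rw [Aalpha_apply]
  have h1 : 0 ≤ Matrix.diagonal (fun i => (outdeg G i : ℝ)) i j := by
    by_cases h : i = j <;> simp [Matrix.diagonal_apply, h]
  have h2 : (0:ℝ) ≤ if G i j then (1:ℝ) else 0 := by positivity
  have : (0:ℝ) ≤ 1 - α := by linarith
  positivity

lemma Aalpha_pos_of_edge {n : ℕ} {α : ℝ} (hα0 : 0 ≤ α) (hα1 : α < 1)
    {G : Fin n → Fin n → Prop} {i j : Fin n} (h : G i j) : 0 < Aalpha α G i j := by
  rw [Aalpha_apply, if_pos h]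
  have h1 : 0 ≤ Matrix.diagonal (fun i => (outdeg G i : ℝ)) i j := by
    by_cases h : i = j <;> simp [Matrix.diagonal_apply, h]
  nlinarith

lemma Aalpha_mulVec_apply {n : ℕ} (α : ℝ) (G : Fin n → Fin n → Prop) (X : Fin n → ℝ)
    (i : Fin n) :
    (Aalpha α G).mulVec X i
      = α * (outdeg G i : ℝ) * X i + (1 - α) * ∑ j, (if G i j then X j else 0) := by
  simp only [Matrix.mulVec, dotProduct, Aalpha_apply, add_mul]
  rw [Finset.sum_add_distrib]
  congr 1
  · rw [Finset.sum_eq_single i]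
    · simp [Matrix.diagonal_apply]
    · intro b _ hb
      simp [Matrix.diagonal_apply, Ne.symm hb]
    · intro h; exact absurd (Finset.mem_univ i) h
  · rw [Finset.mul_sum]
    exact Finset.sum_congr rfl fun j _ => by by_cases h : G i j <;> simp [h]

/-- rerouting arcs from in-neighbors of `v_p` towards `v_q` does not
decrease the `A_α` spectral radius when `x_{v_q} ≥ x_{v_p}` (Perron vector entries). -/
theorem stmt6 {n : ℕ} (α : ℝ) (hα0 : 0 ≤ α) (hα1 : α < 1)
    (G : Fin n → Fin n → Prop) (hGs : ∀ i, ¬ G i i) (hSC : SConn G)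
    (X : Fin n → ℝ) (hXpos : ∀ i, 0 < X i)
    (hX : (Aalpha α G).mulVec X = lamAlpha α G • X)
    (p q : Fin n) (hpq : p ≠ q)
    (T : Finset (Fin n)) (hTne : T.Nonempty)
    (hTin : ∀ v ∈ T, G v p ∧ ¬ G v q ∧ v ≠ q)
    (H : Fin n → Fin n → Prop)
    (hH : ∀ u v, H u v ↔ ((G u v ∧ ¬(u ∈ T ∧ v = p)) ∨ (u ∈ T ∧ v = q))) :
    (X p ≤ X q → lamAlpha α G ≤ lamAlpha α H) ∧
      (SConn H → X p < X q → lamAlpha α G < lamAlpha α H) := by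
  obtain ⟨v0, hv0⟩ := hTne
  have hn : 0 < n := v0.pos
  set lam := lamAlpha α G with hlam
  have h1α : (0:ℝ) < 1 - α := by linarith
  -- outdegrees agree
  have houtdeg : ∀ v, outdeg H v = outdeg G v := by
    intro v
    by_cases hv : v ∈ T
    · obtain ⟨hGp, hGq, _⟩ := hTin v hv
      have hfil : Finset.univ.filter (fun j => H v j)
          = insert q ((Finset.univ.filter (fun j => G v j)).erase p) := by
        ext j
        simp only [Finset.mem_filter, Finset.mem_univ, true_and, Finset.mem_insert,
          Finset.mem_erase, hH]
        constructor
        · rintro (⟨hg, hnp⟩ | ⟨_, rfl⟩)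
          · right
            refine ⟨fun hjp => hnp ⟨hv, hjp⟩, hg⟩
          · left; rfl
        · rintro (rfl | ⟨hjp, hg⟩)
          · exact Or.inr ⟨hv, rfl⟩
          · exact Or.inl ⟨hg, fun h => hjp h.2⟩
      have hqe : q ∉ (Finset.univ.filter (fun j => G v j)).erase p := by
        simp [Finset.mem_erase, hGq]
      have hpm : p ∈ Finset.univ.filter (fun j => G v j) := by simp [hGp]
      rw [outdeg, hfil, Finset.card_insert_of_notMem hqe, Finset.card_erase_of_mem hpm,
        outdeg]
      have : 1 ≤ (Finset.univ.filter (fun j => G v j)).card := Finset.card_pos.mpr ⟨p, hpm⟩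
      omega
    · unfold outdeg
      congr 1
      ext j
      simp only [Finset.mem_filter, Finset.mem_univ, true_and, hH]
      constructor
      · rintro (⟨hg, _⟩ | ⟨hvT, _⟩)
        · exact hg
        · exact absurd hvT hv
      · intro hg
        exact Or.inl ⟨hg, fun h => hv h.1⟩
  -- row identity
  have hrow : ∀ v, (Aalpha α H).mulVec X v
      = lam * X v + (if v ∈ T then (1 - α) * (X q - X p) else 0) := by
    intro v
    have hG : (Aalpha α G).mulVec X v = lam * X v := by
      rw [hX]; simp [hlam]
    have hsum : (∑ j, (if H v j then X j else 0))
        = (∑ j, (if G v j then X j else 0)) + (if v ∈ T then X q - X p else 0) := by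
      by_cases hv : v ∈ T
      · obtain ⟨hGp, hGq, _⟩ := hTin v hv
        rw [if_pos hv]
        have hpt : ∀ j, (if H v j then X j else 0)
            = (if G v j then X j else 0)
              + ((if j = q then X q else 0) - (if j = p then X p else 0)) := by
          intro j
          by_cases hjq : j = q
          · subst hjq
            have hHj : H v j := (hH v j).mpr (Or.inr ⟨hv, rfl⟩)
            simp [hHj, hGq, Ne.symm hpq]
          · by_cases hjp : j = p
            · have hHj : ¬ H v j := by
                rw [hH, hjp]
                rintro (⟨_, hx⟩ | ⟨_, hx⟩)
                · exact hx ⟨hv, rfl⟩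
                · exact hpq hx
              have hGj : G v j := hjp ▸ hGp
              rw [hjp] at hHj hGj ⊢
              simp [hHj, hGj, hpq]
            · have : H v j ↔ G v j := by
                rw [hH]
                constructor
                · rintro (⟨hg, _⟩ | ⟨_, hx⟩)
                  · exact hg
                  · exact absurd hx hjq
                · intro hg; exact Or.inl ⟨hg, fun h => hjp h.2⟩
              simp [this, hjq, hjp]
        rw [Finset.sum_congr rfl (fun j _ => hpt j), Finset.sum_add_distrib,
          Finset.sum_sub_distrib]
        congr 1
        rw [Finset.sum_ite_eq' Finset.univ q (fun _ => X q),
          Finset.sum_ite_eq' Finset.univ p (fun _ => X p)]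
        simp
      · rw [if_neg hv, add_zero]
        refine Finset.sum_congr rfl fun j _ => ?_
        have : H v j ↔ G v j := by
          rw [hH]
          constructor
          · rintro (⟨hg, _⟩ | ⟨hvT, _⟩)
            · exact hg
            · exact absurd hvT hv
          · intro hg; exact Or.inl ⟨hg, fun h => hv h.1⟩
        simp [this]
    rw [Aalpha_mulVec_apply, houtdeg v, hsum, ← hG, Aalpha_mulVec_apply]
    by_cases hv : v ∈ T <;> simp [hv] <;> ring
  have hMnn : ∀ i j, 0 ≤ Aalpha α H i j := Aalpha_nonneg hα0 hα1.le H
  have hlam0 : 0 ≤ lam := by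
    have h1 : (Aalpha α G).mulVec X v0 = lam * X v0 := by rw [hX]; simp [hlam]
    have h2 : 0 ≤ (Aalpha α G).mulVec X v0 :=
      mulVec_nonneg (Aalpha_nonneg hα0 hα1.le G) (fun i => (hXpos i).le) v0
    nlinarith [hXpos v0]
  constructor
  · intro hXpq
    have hge : ∀ i, lam * X i ≤ (Aalpha α H).mulVec X i := by
      intro i
      rw [hrow i]
      have : (0:ℝ) ≤ (if i ∈ T then (1 - α) * (X q - X p) else 0) := by
        by_cases hi : i ∈ T
        · rw [if_pos hi]; nlinarith
        · rw [if_neg hi]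
      linarith
    exact specRad_ge hn _ hMnn X hXpos lam hlam0 hge
  · intro hSCH hXpq
    set M := Aalpha α H with hM
    set w : Fin n → ℝ := fun v => if v ∈ T then (1 - α) * (X q - X p) else 0 with hw
    have hw0 : ∀ i, 0 ≤ w i := by
      intro i
      by_cases hi : i ∈ T <;> simp [hw, hi]
      nlinarith
    have hwv0 : 0 < w v0 := by
      simp [hw, hv0]
      nlinarith
    have hedge : ∀ i j, H i j → 0 < M i j := fun i j h => Aalpha_pos_of_edge hα0 hα1 h
    have hreach : ∀ i, Relation.ReflTransGen H i v0 := fun i => hSCH i v0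
    have hex : ∀ i, ∃ k, 0 < iterVec M w k i := fun i =>
      iterVec_pos_of_reach hMnn hedge hw0 hwv0 i (hreach i)
    choose ks hks using hex
    set K := Finset.univ.sup ks with hK
    set U : Fin n → ℝ := iterVec M w K with hU
    set Z : Fin n → ℝ := iterVec M X K with hZ
    have hUpos : ∀ i, 0 < U i := by
      intro i
      exact lt_of_lt_of_le (hks i)
        (iterVec_mono hMnn hw0 (Finset.le_sup (Finset.mem_univ i)) i)
    have hZpos : ∀ i, 0 < Z i := by
      intro i
      exact lt_of_lt_of_le (hXpos i)
        (iterVec_mono hMnn (fun j => (hXpos j).le) (Nat.zero_le K) i)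
    have hMX : M.mulVec X = lam • X + w := by
      funext v
      rw [hrow v]
      simp [hw]
    have hMZ : ∀ i, M.mulVec Z i = lam * Z i + U i := by
      intro i
      have h1 : M.mulVec Z = iterVec M (M.mulVec X) K := (iterVec_mulVec M X K).symm
      rw [h1, hMX, iterVec_add, iterVec_smul]
      simp [hU, hZ]
    obtain ⟨i0⟩ : Nonempty (Fin n) := ⟨v0⟩
    set ε := Finset.univ.inf' ⟨i0, Finset.mem_univ i0⟩ (fun i => U i / Z i) with hε
    have hεpos : 0 < ε := by
      rw [hε]; refine (Finset.lt_inf'_iff _).2 ?_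
      exact fun i _ => div_pos (hUpos i) (hZpos i)
    have hge : ∀ i, (lam + ε) * Z i ≤ M.mulVec Z i := by
      intro i
      rw [hMZ i]
      have h1 : ε ≤ U i / Z i := Finset.inf'_le _ (Finset.mem_univ i)
      have h2 : ε * Z i ≤ U i := by
        rw [← div_mul_cancel₀ (U i) (hZpos i).ne']
        exact mul_le_mul_of_nonneg_right h1 (hZpos i).le
      nlinarith
    have := specRad_ge hn M hMnn Z hZpos (lam + ε) (by linarith) hge
    have : lam + ε ≤ lamAlpha α H := this
    linarith
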